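/- Let $\mathcal{H}$ be a Hilbert space, $A$ a bounded self-adjoint operator on $\mathcal{H}$, and $\{j_\alpha\}_{\alpha \in S}$ a countable family of bounded self-adjoint operators with $\sum_\alpha j_\alpha^2 = I$ (converging strongly). Let $C = -2\sum_\alpha [A, j_\alpha]^2$ (assumed to converge to a bounded operator). Then for every nonzero $\varphi \in \mathcal{H}$ there exists $\alpha \in S$ with $j_\alpha \varphi \neq 0$ and $\|A j_\alpha \varphi\|^2 \leq \left(2 \frac{\|A\varphi\|^2}{\|\varphi\|^2} + \|C\|\right) \|j_\alpha \varphi\|^2$. -/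

import Mathlib

/-- the Last–Simon partition of unity estimate. -/
theorem stmt3 {H : Type*} [NormedAddCommGroup H] [InnerProductSpace ℂ H] [CompleteSpace H]
    {S : Type*} [Countable S]
    (A : H →L[ℂ] H) (hA : IsSelfAdjoint A)
    (j : S → H →L[ℂ] H) (hj : ∀ α, IsSelfAdjoint (j α))
    (hsum : ∀ x : H, HasSum (fun α => j α (j α x)) x)
    (C : H →L[ℂ] H)
    (hC : ∀ x : H, HasSum
      (fun α => (-2 : ℂ) • ((A ∘L j α - j α ∘L A) ((A ∘L j α - j α ∘L A) x))) (C x))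
    (φ : H) (hφ : φ ≠ 0) :
    ∃ α : S, j α φ ≠ 0 ∧
      ‖A (j α φ)‖ ^ 2 ≤ (2 * ‖A φ‖ ^ 2 / ‖φ‖ ^ 2 + ‖C‖) * ‖j α φ‖ ^ 2 := by
  set B : S → H →L[ℂ] H := fun α => A ∘L j α - j α ∘L A with hB
  set K : ℝ := 2 * ‖A φ‖ ^ 2 / ‖φ‖ ^ 2 + ‖C‖ with hK
  -- Fact 1 : for any ψ, ∑ ‖j α ψ‖² = ‖ψ‖²
  have fact1 : ∀ ψ : H, HasSum (fun α => ‖j α ψ‖ ^ 2) (‖ψ‖ ^ 2) := by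
    intro ψ
    have h1 : HasSum (fun α => (inner ℂ ψ (j α (j α ψ)) : ℂ)) (inner ℂ ψ ψ) :=
      (innerSL ℂ ψ).hasSum (hsum ψ)
    have h2 := Complex.hasSum_re h1
    have e2 : (inner ℂ ψ ψ : ℂ).re = ‖ψ‖ ^ 2 := by
      rw [inner_self_eq_norm_sq_to_K (𝕜 := ℂ) ψ]; norm_cast
    rw [e2] at h2
    refine h2.congr_fun ?_
    intro α
    have hs : (inner ℂ (j α ψ) (j α ψ) : ℂ) = inner ℂ ψ (j α (j α ψ)) := (hj α).isSymmetric ψ (j α ψ)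
    rw [← hs, inner_self_eq_norm_sq_to_K (𝕜 := ℂ)]; norm_cast
  -- adjoint relation for B : ⟪φ, B α x⟫ = -⟪B α φ, x⟫
  have symm : ∀ (T : H →L[ℂ] H), IsSelfAdjoint T → ∀ x y : H,
      (inner ℂ (T x) y : ℂ) = inner ℂ x (T y) := fun T hT x y => hT.isSymmetric x y
  have hBadj : ∀ (α : S) (x y : H), (inner ℂ x (B α y) : ℂ) = -inner ℂ (B α x) y := by
    intro α x y
    simp only [hB, ContinuousLinearMap.sub_apply, ContinuousLinearMap.comp_apply,
      inner_sub_right, inner_sub_left]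
    rw [← symm A hA x (j α y), ← symm (j α) (hj α) (A x) y,
      ← symm (j α) (hj α) x (A y), ← symm A hA (j α x) y]
    ring
  -- Fact 2 : ∑ 2‖B α φ‖² = re ⟪φ, C φ⟫
  have fact2 : HasSum (fun α => 2 * ‖B α φ‖ ^ 2) (inner ℂ φ (C φ) : ℂ).re := by
    have h1 : HasSum (fun α => (inner ℂ φ ((-2 : ℂ) • (B α (B α φ))) : ℂ)) (inner ℂ φ (C φ)) :=
      (innerSL ℂ φ).hasSum (hC φ)
    have h2 := Complex.hasSum_re h1
    refine h2.congr_fun ?_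
    intro α
    rw [inner_smul_right, hBadj α φ (B α φ),
      inner_self_eq_norm_sq_to_K (𝕜 := ℂ) (B α φ)]
    simp
    norm_cast
  -- pointwise bound
  have ptwise : ∀ α : S, ‖A (j α φ)‖ ^ 2 ≤ 2 * ‖j α (A φ)‖ ^ 2 + 2 * ‖B α φ‖ ^ 2 := by
    intro α
    have hd : A (j α φ) = j α (A φ) + B α φ := by
      simp [hB, ContinuousLinearMap.sub_apply]
    have h1 : ‖A (j α φ)‖ ≤ ‖j α (A φ)‖ + ‖B α φ‖ := by
      rw [hd]; exact norm_add_le _ _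
    nlinarith [norm_nonneg (A (j α φ)), norm_nonneg (j α (A φ)), norm_nonneg (B α φ),
      sq_nonneg (‖j α (A φ)‖ - ‖B α φ‖)]
  -- summability of the majorant and of f
  have hg : HasSum (fun α => 2 * ‖j α (A φ)‖ ^ 2 + 2 * ‖B α φ‖ ^ 2)
      (2 * ‖A φ‖ ^ 2 + (inner ℂ φ (C φ) : ℂ).re) :=
    ((fact1 (A φ)).mul_left 2).add fact2
  have hfsummable : Summable (fun α => ‖A (j α φ)‖ ^ 2) :=
    Summable.of_nonneg_of_le (fun α => by positivity) ptwise hg.summable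
  have htsum_le : (∑' α, ‖A (j α φ)‖ ^ 2) ≤ 2 * ‖A φ‖ ^ 2 + (inner ℂ φ (C φ) : ℂ).re := by
    rw [← hg.tsum_eq]
    exact Summable.tsum_le_tsum ptwise hfsummable hg.summable
  -- bound re ⟪φ, C φ⟫ ≤ ‖C‖ ‖φ‖²
  have hCb : (inner ℂ φ (C φ) : ℂ).re ≤ ‖C‖ * ‖φ‖ ^ 2 := by
    have h1 : (inner ℂ φ (C φ) : ℂ).re ≤ ‖(inner ℂ φ (C φ) : ℂ)‖ := Complex.re_le_norm _
    have h2 : ‖(inner ℂ φ (C φ) : ℂ)‖ ≤ ‖φ‖ * ‖C φ‖ := norm_inner_le_norm φ (C φ)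
    have h3 : ‖C φ‖ ≤ ‖C‖ * ‖φ‖ := C.le_opNorm φ
    nlinarith [norm_nonneg φ, norm_nonneg (C φ)]
  have hφpos : (0 : ℝ) < ‖φ‖ ^ 2 := by
    have := norm_pos_iff.mpr hφ; positivity
  by_contra hcon
  push_neg at hcon
  -- termwise lower bound
  have hlow : ∀ α : S, K * ‖j α φ‖ ^ 2 ≤ ‖A (j α φ)‖ ^ 2 := by
    intro α
    by_cases h : j α φ = 0
    · simp [h]
    · exact le_of_lt (hcon α h)
  -- some α₀ with j α₀ φ ≠ 0
  obtain ⟨α₀, hα₀⟩ : ∃ α : S, j α φ ≠ 0 := by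
    by_contra hall
    push_neg at hall
    have : HasSum (fun α => ‖j α φ‖ ^ 2) 0 := by
      have : (fun α : S => ‖j α φ‖ ^ 2) = fun _ => 0 := by
        funext α; simp [hall α]
      rw [this]; exact hasSum_zero
    have h0 := this.unique (fact1 φ)
    exact absurd h0 hφpos.ne
  have hstrict : K * ‖j α₀ φ‖ ^ 2 < ‖A (j α₀ φ)‖ ^ 2 := hcon α₀ hα₀
  have hKsum : HasSum (fun α => K * ‖j α φ‖ ^ 2) (K * ‖φ‖ ^ 2) := (fact1 φ).mul_left K
  have hlt : K * ‖φ‖ ^ 2 < ∑' α, ‖A (j α φ)‖ ^ 2 := by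
    rw [← hKsum.tsum_eq]
    exact Summable.tsum_lt_tsum hlow hstrict hKsum.summable hfsummable
  have hfin : K * ‖φ‖ ^ 2 = 2 * ‖A φ‖ ^ 2 + ‖C‖ * ‖φ‖ ^ 2 := by
    rw [hK]; field_simp
  linarith
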